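/- Let m > 1, ν > 0, c > 0 be real and let K : (0,1) → [0,∞) be a function. Then there is no differentiable function r : (0,1) → (0,1] satisfying, for all u ∈ (0,1), the equation r'(u) = −m·r(u)/u − (K(u)·ν/(c²·u^m))·√(1−r(u)²)/r(u) (i.e. the scalar traveling-wave ODE (u-grafo) with σ = 0 has no solution defined on the whole interval (0,1) with values in (0,1]). -/

import Mathlib

/-- The scalar traveling-wave ODE (u-grafo) with `σ = 0`, namely
`r'(u) = -m·r(u)/u - (K(u)·ν/(c²·u^m))·√(1-r(u)²)/r(u)` with `K ≥ 0`, has no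
differentiable solution defined on all of `(0,1)` with values in `(0,1]`. -/
theorem stmt8 (m ν c : ℝ) (hm : 1 < m) (hν : 0 < ν) (hc : 0 < c)
    (K : ℝ → ℝ) (hK : ∀ u ∈ Set.Ioo (0:ℝ) 1, 0 ≤ K u) :
    ¬ ∃ r : ℝ → ℝ,
      (∀ u ∈ Set.Ioo (0:ℝ) 1, r u ∈ Set.Ioc (0:ℝ) 1) ∧
      (∀ u ∈ Set.Ioo (0:ℝ) 1, HasDerivAt r
        (-(m * r u / u) -
          (K u * ν / (c ^ 2 * u ^ m)) * Real.sqrt (1 - (r u) ^ 2) / r u) u) := by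
  rintro ⟨r, hr, hr'⟩
  set g : ℝ → ℝ := fun u => u ^ m * r u with hgdef
  have hg : ∀ u ∈ Set.Ioo (0:ℝ) 1, HasDerivAt g
      (-(u ^ m * ((K u * ν / (c ^ 2 * u ^ m)) * Real.sqrt (1 - (r u) ^ 2) / r u))) u := by
    intro u hu
    have hu0 : (0:ℝ) < u := hu.1
    have h1 : HasDerivAt (fun u : ℝ => u ^ m) (m * u ^ (m - 1)) u :=
      Real.hasDerivAt_rpow_const (Or.inl hu0.ne')
    have h2 := h1.mul (hr' u hu)
    convert h2 using 1
    case e'_4 => rfl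
    case e'_5 => rfl
    case e'_8 => rfl
    have hum : u ^ (m - 1) = u ^ m / u := by
      rw [Real.rpow_sub hu0, Real.rpow_one]
    rw [hum]
    field_simp
    ring
  have hgle : ∀ u ∈ Set.Ioo (0:ℝ) 1,
      -(u ^ m * ((K u * ν / (c ^ 2 * u ^ m)) * Real.sqrt (1 - (r u) ^ 2) / r u)) ≤ 0 := by
    intro u hu
    have hu0 : (0:ℝ) < u := hu.1
    have hum : (0:ℝ) < u ^ m := Real.rpow_pos_of_pos hu0 m
    have hr0 : 0 < r u := (hr u hu).1
    have : 0 ≤ (K u * ν / (c ^ 2 * u ^ m)) * Real.sqrt (1 - (r u) ^ 2) / r u := by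
      apply div_nonneg _ hr0.le
      apply mul_nonneg _ (Real.sqrt_nonneg _)
      apply div_nonneg (mul_nonneg (hK u hu) hν.le)
      positivity
    nlinarith
  have hanti : AntitoneOn g (Set.Ioo (0:ℝ) 1) := by
    apply antitoneOn_of_deriv_nonpos (convex_Ioo 0 1)
    · intro x hx
      exact ((hg x hx).differentiableAt.continuousAt).continuousWithinAt
    · intro x hx
      rw [interior_Ioo] at hx
      exact (hg x hx).differentiableAt.differentiableWithinAt
    · intro x hx
      rw [interior_Ioo] at hx
      rw [(hg x hx).deriv]
      exact hgle x hx
  have hhalf : (1/2:ℝ) ∈ Set.Ioo (0:ℝ) 1 := by norm_num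
  have hε : 0 < g (1/2) := by
    have := (hr _ hhalf).1
    have : (0:ℝ) < (1/2:ℝ) ^ m := Real.rpow_pos_of_pos (by norm_num) m
    have := (hr _ hhalf).1
    positivity
  set ε := g (1/2) with hεdef
  set v := min (ε/2) (1/4) with hvdef
  have hv0 : 0 < v := lt_min (by linarith) (by norm_num)
  have hv1 : v ≤ 1/4 := min_le_right _ _
  have hvmem : v ∈ Set.Ioo (0:ℝ) 1 := ⟨hv0, by linarith⟩
  have hvle : v ≤ 1/2 := by linarith
  have h1 : ε ≤ g v := hanti hvmem hhalf hvle
  have h2 : g v ≤ v := by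
    have hrv := hr v hvmem
    have hvm : (0:ℝ) < v ^ m := Real.rpow_pos_of_pos hv0 m
    have hgv : g v ≤ v ^ m := by
      have : v ^ m * r v ≤ v ^ m * 1 := by
        exact mul_le_mul_of_nonneg_left hrv.2 hvm.le
      simpa [hgdef] using this
    have hvm' : v ^ m ≤ v ^ (1:ℝ) :=
      Real.rpow_le_rpow_of_exponent_ge hv0 (by linarith) hm.le
    rw [Real.rpow_one] at hvm'
    linarith
  have h3 : v ≤ ε / 2 := min_le_left _ _
  linarith
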